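/- If a random variable X following the Beta(α, β) distribution, then X is 1/(4(α+β+1))-sub-Gaussian: E[exp(λ(X − α/(α+β)))] ≤ exp(λ²/(8(α+β+1))) for all λ ∈ ℝ. -/

import Mathlib

open MeasureTheory Real

open scoped ENNReal NNReal

section BetaSubGaussianAux

open Set


lemma integrableOn_beta {p q : ℝ} (hp : -1 < p) (hq : -1 < q) :
    IntegrableOn (fun x : ℝ => x ^ p * (1 - x) ^ q) (Set.Ioo 0 1) := by
  have h := Complex.betaIntegral_convergent (u := p + 1) (v := q + 1)
    (by simp; linarith) (by simp; linarith)
  rw [intervalIntegrable_iff_integrableOn_Ioo_of_le (by norm_num)] at h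
  have h2 : IntegrableOn
      (fun x : ℝ => Complex.re ((x:ℂ) ^ ((p:ℂ) + 1 - 1) * (1 - x) ^ ((q:ℂ) + 1 - 1)))
      (Set.Ioo 0 1) :=
    (Complex.reCLM : ℂ →L[ℝ] ℝ).integrable_comp h
  refine h2.congr_fun (fun x hx => ?_) measurableSet_Ioo
  have e1 : (p:ℂ) + 1 - 1 = (p:ℂ) := by ring
  have e2 : (q:ℂ) + 1 - 1 = (q:ℂ) := by ring
  beta_reduce
  rw [e1, e2, ← Complex.ofReal_one, ← Complex.ofReal_sub, ← Complex.ofReal_cpow hx.1.le,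
    ← Complex.ofReal_cpow (by linarith [hx.2] : (0:ℝ) ≤ 1 - x), ← Complex.ofReal_mul,
    Complex.ofReal_re]

noncomputable def betaF (a b : ℝ) : ℝ → ℝ := fun x => x ^ (a-1) * (1-x) ^ (b-1)

lemma measurable_betaF (a b : ℝ) : Measurable (betaF a b) := by
  unfold betaF; fun_prop

lemma betaF_nonneg {a b : ℝ} {x : ℝ} (hx : x ∈ Set.Ioo (0:ℝ) 1) : 0 ≤ betaF a b x :=
  mul_nonneg (Real.rpow_nonneg hx.1.le _) (Real.rpow_nonneg (by linarith [hx.2]) _)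

lemma integrableOn_mul_betaF {a b : ℝ} (ha : 0 < a) (hb : 0 < b) {g : ℝ → ℝ}
    (hg : AEStronglyMeasurable g (volume.restrict (Set.Ioo 0 1))) {C : ℝ}
    (hC : ∀ x ∈ Set.Ioo (0:ℝ) 1, |g x| ≤ C) :
    IntegrableOn (fun x => g x * betaF a b x) (Set.Ioo 0 1) := by
  refine Integrable.bdd_mul (c := C) (integrableOn_beta (by linarith) (by linarith)) hg ?_
  rw [ae_restrict_iff' measurableSet_Ioo]
  exact Filter.Eventually.of_forall fun x hx => by simpa using hC x hx
noncomputable def phi (a b : ℝ) (n : ℕ) (lam : ℝ) : ℝ :=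
  ∫ x in Set.Ioo (0:ℝ) 1,
    (x - a/(a+b))^n * Real.exp (lam * (x - a/(a+b))) * betaF a b x

lemma mean_mem_Ioo {a b : ℝ} (ha : 0 < a) (hb : 0 < b) : a/(a+b) ∈ Set.Ioo (0:ℝ) 1 :=
  ⟨div_pos ha (by linarith), (div_lt_one (by linarith)).2 (by linarith)⟩

lemma phi_integrand_bound {a b : ℝ} (ha : 0 < a) (hb : 0 < b) (n : ℕ) {lam R : ℝ}
    (hR : |lam| ≤ R) {x : ℝ} (hx : x ∈ Set.Ioo (0:ℝ) 1) :
    |(x - a/(a+b))^n * Real.exp (lam * (x - a/(a+b)))| ≤ 2^n * Real.exp (2*R) := by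
  have hm := mean_mem_Ioo ha hb
  have h1 : |x - a/(a+b)| ≤ 2 := by
    rw [abs_le]; constructor <;> [nlinarith [hx.1, hm.2]; nlinarith [hx.2, hm.1]]
  have h2 : lam * (x - a/(a+b)) ≤ 2*R := by
    calc lam * (x - a/(a+b)) ≤ |lam * (x - a/(a+b))| := le_abs_self _
    _ = |lam| * |x - a/(a+b)| := abs_mul _ _
    _ ≤ R * 2 := by
        apply mul_le_mul hR h1 (abs_nonneg _) ((abs_nonneg lam).trans hR)
    _ = 2*R := by ring
  rw [abs_mul, abs_pow, Real.abs_exp]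
  have : (0:ℝ) ≤ Real.exp (lam * (x - a/(a+b))) := (Real.exp_pos _).le
  apply mul_le_mul (pow_le_pow_left₀ (abs_nonneg _) h1 n) (Real.exp_le_exp.2 h2) this
  positivity

lemma integrableOn_phi_integrand {a b : ℝ} (ha : 0 < a) (hb : 0 < b) (n : ℕ) (lam : ℝ) :
    IntegrableOn (fun x => (x - a/(a+b))^n * Real.exp (lam * (x - a/(a+b))) * betaF a b x)
      (Set.Ioo 0 1) := by
  apply integrableOn_mul_betaF ha hb (C := 2^n * Real.exp (2*|lam|))
  · apply Continuous.aestronglyMeasurable; fun_prop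
  · exact fun x hx => phi_integrand_bound ha hb n le_rfl hx

lemma hasDerivAt_phi {a b : ℝ} (ha : 0 < a) (hb : 0 < b) (n : ℕ) (lam : ℝ) :
    HasDerivAt (phi a b n) (phi a b (n+1) lam) lam := by
  have key := hasDerivAt_integral_of_dominated_loc_of_deriv_le (s := Metric.ball lam 1) (μ := volume.restrict (Set.Ioo (0:ℝ) 1))
    (x₀ := lam)
    (F := fun t x => (x - a/(a+b))^n * Real.exp (t * (x - a/(a+b))) * betaF a b x)
    (F' := fun t x => (x - a/(a+b))^(n+1) * Real.exp (t * (x - a/(a+b))) * betaF a b x)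
    (bound := fun x => 2^(n+1) * Real.exp (2*(|lam|+1)) * betaF a b x)
    (Metric.ball_mem_nhds lam one_pos) ?_ (integrableOn_phi_integrand ha hb n lam) ?_ ?_ ?_ ?_
  · exact key.2
  · exact Filter.Eventually.of_forall fun t =>
      (Continuous.aestronglyMeasurable (by fun_prop)).mul
        (measurable_betaF a b).aestronglyMeasurable
  · exact (Continuous.aestronglyMeasurable (by fun_prop)).mul
      (measurable_betaF a b).aestronglyMeasurable
  · rw [ae_restrict_iff' measurableSet_Ioo]
    refine Filter.Eventually.of_forall fun x hx => fun t ht => ?_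
    simp only [Real.norm_eq_abs]
    rw [abs_mul (_ * _)]
    have hb1 : |t| ≤ |lam| + 1 := by
      have := mem_ball_iff_norm.1 ht
      have h2 : |t - lam| < 1 := by simpa using this
      calc |t| = |lam + (t - lam)| := by ring_nf
      _ ≤ |lam| + |t - lam| := abs_add_le _ _
      _ ≤ |lam| + 1 := by linarith
    have := phi_integrand_bound ha hb (n+1) hb1 hx
    have hfn : |betaF a b x| = betaF a b x := abs_of_nonneg (betaF_nonneg hx)
    rw [hfn]
    exact mul_le_mul_of_nonneg_right this (betaF_nonneg hx)
  · apply integrableOn_mul_betaF ha hb (C := |2^(n+1) * Real.exp (2*(|lam|+1))|)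
    · exact aestronglyMeasurable_const
    · exact fun x hx => le_rfl
  · rw [ae_restrict_iff' measurableSet_Ioo]
    refine Filter.Eventually.of_forall fun x hx => fun t ht => ?_
    have h : HasDerivAt (fun t => Real.exp (t * (x - a/(a+b)))) ((x - a/(a+b)) * Real.exp (t * (x - a/(a+b)))) t := by
      simpa [mul_comm] using (hasDerivAt_mul_const (x - a/(a+b))).exp (x := t)
    have h2 := (h.const_mul ((x - a/(a+b))^n)).mul_const (betaF a b x)
    refine h2.congr_deriv ?_
    ring

noncomputable def betaK (a b : ℝ) (j : ℕ) (lam : ℝ) : ℝ :=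
  ∫ x in Set.Ioo (0:ℝ) 1, x^j * Real.exp (lam * (x - a/(a+b))) * betaF a b x

lemma integrableOn_betaK_integrand {a b : ℝ} (ha : 0 < a) (hb : 0 < b) (j : ℕ) (lam : ℝ) :
    IntegrableOn (fun x => x^j * Real.exp (lam * (x - a/(a+b))) * betaF a b x)
      (Set.Ioo 0 1) := by
  apply integrableOn_mul_betaF ha hb (C := Real.exp (2*|lam|))
  · apply Continuous.aestronglyMeasurable; fun_prop
  · intro x hx
    rw [abs_mul, abs_pow, Real.abs_exp]
    have h1 : |x| ≤ 1 := by rw [abs_of_pos hx.1]; exact hx.2.le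
    have hm := mean_mem_Ioo ha hb
    have h2 : lam * (x - a/(a+b)) ≤ 2*|lam| := by
      calc lam * (x - a/(a+b)) ≤ |lam * (x - a/(a+b))| := le_abs_self _
      _ = |lam| * |x - a/(a+b)| := abs_mul _ _
      _ ≤ |lam| * 2 := by
          apply mul_le_mul_of_nonneg_left _ (abs_nonneg _)
          rw [abs_le]; constructor <;> [nlinarith [hx.1, hm.2]; nlinarith [hx.2, hm.1]]
      _ = 2*|lam| := by ring
    calc |x|^j * Real.exp (lam * (x - a/(a+b))) ≤ 1^j * Real.exp (2*|lam|) := by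
          apply mul_le_mul (pow_le_pow_left₀ (abs_nonneg _) h1 j) (Real.exp_le_exp.2 h2)
            (Real.exp_pos _).le (by norm_num)
    _ = Real.exp (2*|lam|) := by ring

lemma phi_zero_pos {a b : ℝ} (ha : 0 < a) (hb : 0 < b) (lam : ℝ) : 0 < phi a b 0 lam := by
  rw [phi]
  rw [integral_pos_iff_support_of_nonneg_ae]
  · rw [Measure.restrict_apply']
    · have hsub : Set.Ioo (0:ℝ) 1 ⊆
          Function.support (fun x => (x - a/(a+b))^0 * Real.exp (lam * (x - a/(a+b))) * betaF a b x) ∩ Set.Ioo 0 1 := by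
        intro x hx
        refine ⟨?_, hx⟩
        simp only [Function.mem_support, pow_zero, one_mul]
        have h1 : 0 < betaF a b x :=
          mul_pos (Real.rpow_pos_of_pos hx.1 _) (Real.rpow_pos_of_pos (by linarith [hx.2]) _)
        positivity
      calc (0:ℝ≥0∞) < volume (Set.Ioo (0:ℝ) 1) := by simp
      _ ≤ _ := measure_mono hsub
    · exact measurableSet_Ioo
  · rw [Filter.EventuallyLE, ae_restrict_iff' measurableSet_Ioo]
    refine Filter.Eventually.of_forall fun x hx => ?_
    have h1 : 0 ≤ betaF a b x := betaF_nonneg hx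
    positivity
  · exact integrableOn_phi_integrand ha hb 0 lam

lemma exp_term_le {a b : ℝ} (ha : 0 < a) (hb : 0 < b) (lam : ℝ) {x : ℝ}
    (hx : x ∈ Set.Ioo (0:ℝ) 1) :
    Real.exp (lam * (x - a/(a+b))) ≤ Real.exp (2*|lam|) := by
  have hm := mean_mem_Ioo ha hb
  apply Real.exp_le_exp.2
  calc lam * (x - a/(a+b)) ≤ |lam * (x - a/(a+b))| := le_abs_self _
  _ = |lam| * |x - a/(a+b)| := abs_mul _ _
  _ ≤ |lam| * 2 := by
      apply mul_le_mul_of_nonneg_left _ (abs_nonneg _)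
      rw [abs_le]; constructor <;> [nlinarith [hx.1, hm.2]; nlinarith [hx.2, hm.1]]
  _ = 2*|lam| := by ring

lemma betaK_ibp {a b : ℝ} (ha : 0 < a) (hb : 0 < b) (lam : ℝ) :
    a * betaK a b 0 lam - (a + b - lam) * betaK a b 1 lam - lam * betaK a b 2 lam = 0 := by
  have hm := mean_mem_Ioo ha hb
  set m := a/(a+b) with hm_def
  set w : ℝ → ℝ := fun x => x^a * (1-x)^b * Real.exp (lam*(x - m)) with hw_def
  set W : ℝ → ℝ := fun x =>
    ((a*(1-x) - b*x + lam*(x*(1-x))) * Real.exp (lam*(x - m))) * betaF a b x with hW_def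
  have hderiv : ∀ x ∈ Set.Ioo (0:ℝ) 1, HasDerivAt w (W x) x := by
    intro x hx
    have hx0 : x ≠ 0 := hx.1.ne'
    have hx1 : (1:ℝ) - x ≠ 0 := sub_ne_zero.2 hx.2.ne'
    have h1 : HasDerivAt (fun y : ℝ => y ^ a) (a * x^(a-1)) x :=
      Real.hasDerivAt_rpow_const (Or.inl hx0)
    have h2 : HasDerivAt (fun y : ℝ => (1-y) ^ b) (b * (1-x)^(b-1) * (-1)) x := by
      have hinner : HasDerivAt (fun y : ℝ => 1 - y) (-1) x := by
        simpa using (hasDerivAt_id x).const_sub 1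
      exact (Real.hasDerivAt_rpow_const (p := b) (Or.inl hx1)).comp x hinner
    have h3 : HasDerivAt (fun y : ℝ => Real.exp (lam*(y - m))) (Real.exp (lam*(x-m)) * lam) x := by
      have hinner : HasDerivAt (fun y : ℝ => lam * (y - m)) lam x := by
        simpa using ((hasDerivAt_id x).sub_const m).const_mul lam
      exact hinner.exp
    have h := (h1.mul h2).mul h3
    refine h.congr_deriv ?_
    simp only [Pi.mul_apply]
    have ea : x ^ a = x^(a-1) * x := by
      nth_rewrite 1 [show a = a - 1 + 1 by ring]; rw [Real.rpow_add_one hx0]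
    have eb : (1-x) ^ b = (1-x)^(b-1) * (1-x) := by
      nth_rewrite 1 [show b = b - 1 + 1 by ring]; rw [Real.rpow_add_one hx1]
    rw [hW_def]
    simp only [betaF]
    rw [ea, eb]
    ring
  have hw0 : Filter.Tendsto w (nhdsWithin 0 (Set.Ioi 0)) (nhds 0) := by
    have hc : ContinuousAt w 0 := by
      have c1 : ContinuousAt (fun y : ℝ => y ^ a) 0 :=
        Real.continuousAt_rpow_const 0 a (Or.inr ha.le)
      have c2 : ContinuousAt (fun y : ℝ => (1-y) ^ b) 0 :=
        ContinuousAt.rpow_const (by fun_prop) (Or.inl (by norm_num))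
      exact (c1.mul c2).mul (by fun_prop)
    have hval : w 0 = 0 := by
      simp only [hw_def]
      rw [Real.zero_rpow ha.ne']
      ring
    have h := hc.tendsto.mono_left (nhdsWithin_le_nhds (s := Set.Ioi (0:ℝ)))
    rwa [hval] at h
  have hw1 : Filter.Tendsto w (nhdsWithin 1 (Set.Iio 1)) (nhds 0) := by
    have hc : ContinuousAt w 1 := by
      have c1 : ContinuousAt (fun y : ℝ => y ^ a) 1 :=
        Real.continuousAt_rpow_const 1 a (Or.inl one_ne_zero)
      have c2 : ContinuousAt (fun y : ℝ => (1-y) ^ b) 1 := by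
        have : ContinuousAt (fun y : ℝ => y ^ b) ((fun y : ℝ => 1 - y) 1) := by
          simp only [sub_self]
          exact Real.continuousAt_rpow_const 0 b (Or.inr hb.le)
        exact this.comp (by fun_prop)
      exact (c1.mul c2).mul (by fun_prop)
    have hval : w 1 = 0 := by
      simp only [hw_def]
      rw [sub_self, Real.zero_rpow hb.ne']
      ring
    have h := hc.tendsto.mono_left (nhdsWithin_le_nhds (s := Set.Iio (1:ℝ)))
    rwa [hval] at h
  have hWint' : IntegrableOn W (Set.Ioo (0:ℝ) 1) := by
    rw [hW_def]
    apply integrableOn_mul_betaF ha hb (C := (a + b + |lam|) * Real.exp (2*|lam|))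
    · apply Continuous.aestronglyMeasurable; fun_prop
    · intro x hx
      rw [abs_mul]
      have h1 : |a*(1-x) - b*x + lam*(x*(1-x))| ≤ a + b + |lam| := by
        have hl1 : -|lam| ≤ lam := neg_abs_le lam
        have hl2 : lam ≤ |lam| := le_abs_self lam
        have hxp : 0 ≤ x*(1-x) := by nlinarith [hx.1, hx.2]
        have hxq : x*(1-x) ≤ 1 := by nlinarith [hx.1, hx.2]
        have hA : 0 ≤ |lam| * (1 - x*(1-x)) := mul_nonneg (abs_nonneg lam) (by linarith)
        rw [abs_le]
        constructor
        · nlinarith [mul_nonneg (by linarith : (0:ℝ) ≤ lam + |lam|) hxp,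
            mul_pos ha hx.1, mul_pos hb (by linarith [hx.2] : (0:ℝ) < 1 - x),
            mul_pos ha (by linarith [hx.2] : (0:ℝ) < 1 - x), mul_pos hb hx.1]
        · nlinarith [mul_nonneg (by linarith : (0:ℝ) ≤ |lam| - lam) hxp,
            mul_pos ha hx.1, mul_pos hb (by linarith [hx.2] : (0:ℝ) < 1 - x),
            mul_pos ha (by linarith [hx.2] : (0:ℝ) < 1 - x), mul_pos hb hx.1]
      rw [Real.abs_exp]
      apply mul_le_mul h1 (exp_term_le ha hb lam hx) (Real.exp_pos _).le
      positivity
  have hWint : IntervalIntegrable W volume 0 1 := by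
    rw [intervalIntegrable_iff_integrableOn_Ioo_of_le (by norm_num)]
    exact hWint'
  have hftc : ∫ x in (0:ℝ)..1, W x = 0 - 0 :=
    intervalIntegral.integral_eq_sub_of_hasDerivAt_of_tendsto (by norm_num) hderiv hWint hw0 hw1
  rw [intervalIntegral.integral_of_le (by norm_num : (0:ℝ) ≤ 1),
    MeasureTheory.integral_Ioc_eq_integral_Ioo] at hftc
  have hsplit : ∫ x in Set.Ioo (0:ℝ) 1, W x
      = a * betaK a b 0 lam - (a + b - lam) * betaK a b 1 lam - lam * betaK a b 2 lam := by
    have e1 : ∀ x ∈ Set.Ioo (0:ℝ) 1, W x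
        = a * (x^(0:ℕ) * Real.exp (lam*(x-m)) * betaF a b x)
          - (a + b - lam) * (x^(1:ℕ) * Real.exp (lam*(x-m)) * betaF a b x)
          - lam * (x^(2:ℕ) * Real.exp (lam*(x-m)) * betaF a b x) := by
      intro x hx
      rw [hW_def]
      ring
    rw [MeasureTheory.setIntegral_congr_fun measurableSet_Ioo e1]
    have i0 := integrableOn_betaK_integrand ha hb 0 lam
    have i1 := integrableOn_betaK_integrand ha hb 1 lam
    have i2 := integrableOn_betaK_integrand ha hb 2 lam
    have i01 : IntegrableOn (fun x =>
        a * (x^(0:ℕ) * Real.exp (lam*(x-m)) * betaF a b x)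
          - (a + b - lam) * (x^(1:ℕ) * Real.exp (lam*(x-m)) * betaF a b x)) (Set.Ioo 0 1) :=
      (i0.const_mul a).sub (i1.const_mul (a+b-lam))
    rw [MeasureTheory.integral_sub i01 (i2.const_mul lam),
      MeasureTheory.integral_sub (i0.const_mul a) (i1.const_mul (a+b-lam)),
      integral_const_mul, integral_const_mul, integral_const_mul]
    rfl
  rw [← hsplit, hftc]
  ring

lemma phi_zero_eq_K {a b : ℝ} (lam : ℝ) : phi a b 0 lam = betaK a b 0 lam := by
  rw [phi, betaK]
  exact MeasureTheory.setIntegral_congr_fun measurableSet_Ioo fun x _ => by ring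

lemma phi_one_eq_K {a b : ℝ} (ha : 0 < a) (hb : 0 < b) (lam : ℝ) :
    phi a b 1 lam = betaK a b 1 lam - (a/(a+b)) * betaK a b 0 lam := by
  rw [phi, betaK, betaK, ← integral_const_mul,
    ← MeasureTheory.integral_sub (integrableOn_betaK_integrand ha hb 1 lam)
      ((integrableOn_betaK_integrand ha hb 0 lam).const_mul _)]
  exact MeasureTheory.setIntegral_congr_fun measurableSet_Ioo fun x _ => by ring

lemma phi_two_eq_K {a b : ℝ} (ha : 0 < a) (hb : 0 < b) (lam : ℝ) :
    phi a b 2 lam = betaK a b 2 lam - (2*(a/(a+b))) * betaK a b 1 lam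
      + (a/(a+b))^2 * betaK a b 0 lam := by
  have i21 : IntegrableOn (fun x =>
      x^(2:ℕ) * Real.exp (lam*(x - a/(a+b))) * betaF a b x
        - (2*(a/(a+b))) * (x^(1:ℕ) * Real.exp (lam*(x - a/(a+b))) * betaF a b x))
      (Set.Ioo 0 1) :=
    (integrableOn_betaK_integrand ha hb 2 lam).sub
      ((integrableOn_betaK_integrand ha hb 1 lam).const_mul _)
  rw [phi, betaK, betaK, betaK, ← integral_const_mul, ← integral_const_mul,
    ← MeasureTheory.integral_sub (integrableOn_betaK_integrand ha hb 2 lam)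
      ((integrableOn_betaK_integrand ha hb 1 lam).const_mul _),
    ← MeasureTheory.integral_add i21
      ((integrableOn_betaK_integrand ha hb 0 lam).const_mul _)]
  exact MeasureTheory.setIntegral_congr_fun measurableSet_Ioo fun x _ => by ring

lemma phi_ode {a b : ℝ} (ha : 0 < a) (hb : 0 < b) (lam : ℝ) :
    lam * phi a b 2 lam + ((a+b) + lam*(a-b)/(a+b)) * phi a b 1 lam
      = lam * (a*b/(a+b)^2) * phi a b 0 lam := by
  have hc : a + b ≠ 0 := by positivity
  have h := betaK_ibp ha hb lam
  have hm : (a/(a+b)) * (a+b) = a := div_mul_cancel₀ _ hc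
  have e1 : (a+b) + lam*(a-b)/(a+b) = (a+b) + lam*(2*(a/(a+b))-1) := by
    field_simp
    ring
  have e2 : a*b/(a+b)^2 = (a/(a+b))*(1-(a/(a+b))) := by
    field_simp
    ring
  rw [e1, e2, phi_zero_eq_K, phi_one_eq_K ha hb, phi_two_eq_K ha hb]
  linear_combination (-1 : ℝ) * h + (-(betaK a b 0 lam)) * hm

lemma phi_one_zero {a b : ℝ} (ha : 0 < a) (hb : 0 < b) : phi a b 1 0 = 0 := by
  have h := betaK_ibp ha hb 0
  rw [phi_one_eq_K ha hb]
  have hc : (0:ℝ) < a + b := by positivity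
  field_simp
  linarith [h]

lemma gronwall_core {c e v s : ℝ} (hc : 0 < c) (hs : 0 < s)
    {f f' f'' : ℝ → ℝ}
    (hf : ∀ t, HasDerivAt f (f' t) t) (hf' : ∀ t, HasDerivAt f' (f'' t) t)
    (hpos : ∀ t, 0 < f t) (hf'0 : f' 0 = 0)
    (hode : ∀ t, t * f'' t + (c + t*e) * f' t = t * v * f t)
    (hbr : ∀ t, 0 ≤ t → v - s*(1 + c + t*e + s*t^2) ≤ 0) :
    ∀ t, 0 ≤ t → f t ≤ f 0 * Real.exp (s * t^2 / 2) := by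
  set D : ℝ → ℝ := fun t => f' t - s*t*f t with hD_def
  set D' : ℝ → ℝ := fun t => f'' t - (s * f t + s*t* f' t) with hD'_def
  have hD : ∀ t, HasDerivAt D (D' t) t := by
    intro t
    have h1 := ((hasDerivAt_id t).const_mul s).mul (hf t)
    have h2 := (hf' t).sub h1
    refine h2.congr_deriv ?_
    simp only [hD'_def, id_eq]
    ring
  set W : ℝ → ℝ := fun t => t ^ c * Real.exp (e*t + s*t^2/2) with hW_def
  have hWpos : ∀ t, 0 < t → 0 < W t := fun t ht =>
    mul_pos (Real.rpow_pos_of_pos ht c) (Real.exp_pos _)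
  have hexpinner : ∀ t : ℝ, HasDerivAt (fun x : ℝ => Real.exp (e*x + s*x^2/2))
      (Real.exp (e*t + s*t^2/2) * (e + s*t)) t := by
    intro t
    have hinner : HasDerivAt (fun x : ℝ => e*x + s*x^2/2) (e + s*t) t := by
      have h2 := ((hasDerivAt_id t).const_mul e).add
        (((hasDerivAt_pow 2 t).const_mul s).div_const 2)
      refine h2.congr_deriv ?_
      simp [id_eq]; ring
    exact hinner.exp
  have hW : ∀ t, 0 < t → HasDerivAt W (W t * (c/t + e + s*t)) t := by
    intro t ht
    have h1 : HasDerivAt (fun x : ℝ => x ^ c) (c * t^(c-1)) t :=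
      Real.hasDerivAt_rpow_const (Or.inl ht.ne')
    have h := h1.mul (hexpinner t)
    refine h.congr_deriv ?_
    have hrw : t^(c-1) = t^c / t := by
      rw [Real.rpow_sub ht, Real.rpow_one]
    rw [hW_def]
    simp only [hrw]
    field_simp
    ring
  set E : ℝ → ℝ := fun t => W t * D t with hE_def
  have hE : ∀ t, 0 < t → HasDerivAt E (W t * (c/t + e + s*t) * D t + W t * D' t) t :=
    fun t ht => (hW t ht).mul (hD t)
  have hEderiv_nonpos : ∀ t, 0 < t → W t * (c/t + e + s*t) * D t + W t * D' t ≤ 0 := by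
    intro t ht
    have hkey : (c/t + e + s*t) * D t + D' t = f t * (v - s*(1 + c + t*e + s*t^2)) := by
      have h0 := hode t
      have ht' : t ≠ 0 := ht.ne'
      field_simp
      linear_combination h0
    have h1 : W t * (c/t + e + s*t) * D t + W t * D' t
        = W t * (f t * (v - s*(1 + c + t*e + s*t^2))) := by
      rw [← hkey]; ring
    rw [h1]
    apply mul_nonpos_of_nonneg_of_nonpos (hWpos t ht).le
    exact mul_nonpos_of_nonneg_of_nonpos (hpos t).le (hbr t ht.le)
  have hEanti : AntitoneOn E (Set.Ioi 0) := by
    apply antitoneOn_of_deriv_nonpos (convex_Ioi 0)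
    · intro t ht
      exact ((hE t ht).continuousAt).continuousWithinAt
    · intro t ht
      rw [interior_Ioi] at ht
      exact (hE t ht).differentiableAt.differentiableWithinAt
    · intro t ht
      rw [interior_Ioi] at ht
      rw [(hE t ht).deriv]
      exact hEderiv_nonpos t ht
  have hE0 : Filter.Tendsto E (nhdsWithin 0 (Set.Ioi 0)) (nhds 0) := by
    have hWc : Filter.Tendsto W (nhdsWithin 0 (Set.Ioi 0)) (nhds 0) := by
      have c1 : ContinuousAt (fun y : ℝ => y ^ c) 0 :=
        Real.continuousAt_rpow_const 0 c (Or.inr hc.le)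
      have hcW : ContinuousAt W 0 := c1.mul (by fun_prop)
      have hval : W 0 = 0 := by
        simp only [hW_def]
        rw [Real.zero_rpow hc.ne']
        ring
      have h := hcW.tendsto.mono_left (nhdsWithin_le_nhds (s := Set.Ioi (0:ℝ)))
      rwa [hval] at h
    have hDc : Filter.Tendsto D (nhdsWithin 0 (Set.Ioi 0)) (nhds 0) := by
      have hcD : ContinuousAt D 0 := (hD 0).continuousAt
      have hval : D 0 = 0 := by simp [hD_def, hf'0]
      have h := hcD.tendsto.mono_left (nhdsWithin_le_nhds (s := Set.Ioi (0:ℝ)))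
      rwa [hval] at h
    simpa using hWc.mul hDc
  have hEnonpos : ∀ t, 0 < t → E t ≤ 0 := by
    intro t ht
    refine ge_of_tendsto hE0 ?_
    filter_upwards [Ioo_mem_nhdsGT_of_mem (Set.left_mem_Ico.2 ht)] with x hx
    exact hEanti hx.1 ht (le_of_lt hx.2)
  have hDnonpos : ∀ t, 0 < t → D t ≤ 0 := by
    intro t ht
    have h1 : D t = E t / W t := by
      rw [hE_def]; field_simp [(hWpos t ht).ne']
    rw [h1]
    exact div_nonpos_of_nonpos_of_nonneg (hEnonpos t ht) (hWpos t ht).le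
  set G : ℝ → ℝ := fun t => f t * Real.exp (-(s*t^2/2)) with hG_def
  have hG : ∀ t, HasDerivAt G (D t * Real.exp (-(s*t^2/2))) t := by
    intro t
    have hinner : HasDerivAt (fun x : ℝ => -(s*x^2/2)) (-(s*t)) t := by
      have h2 := (((hasDerivAt_pow 2 t).const_mul s).div_const 2).neg
      refine h2.congr_deriv ?_
      simp [id_eq]; ring
    have h := (hf t).mul hinner.exp
    refine h.congr_deriv ?_
    simp only [hD_def]
    ring
  have hGanti : AntitoneOn G (Set.Ici 0) := by
    apply antitoneOn_of_deriv_nonpos (convex_Ici 0)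
    · exact fun t _ => (hG t).continuousAt.continuousWithinAt
    · intro t ht
      exact (hG t).differentiableAt.differentiableWithinAt
    · intro t ht
      rw [interior_Ici] at ht
      rw [(hG t).deriv]
      exact mul_nonpos_of_nonpos_of_nonneg (hDnonpos t ht) (Real.exp_pos _).le
  intro t ht
  have h1 : G t ≤ G 0 := hGanti (Set.self_mem_Ici) ht ht
  have h2 : G 0 = f 0 := by simp [hG_def]
  rw [h2] at h1
  have h3 : f t * Real.exp (-(s*t^2/2)) ≤ f 0 := h1
  have h4 : Real.exp (-(s*t^2/2)) = (Real.exp (s*t^2/2))⁻¹ := by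
    rw [← Real.exp_neg]
  calc f t = f t * Real.exp (-(s*t^2/2)) * Real.exp (s*t^2/2) := by
        rw [h4]; field_simp
  _ ≤ f 0 * Real.exp (s*t^2/2) :=
      mul_le_mul_of_nonneg_right h3 (Real.exp_pos _).le
  _ = f 0 * Real.exp (s * t^2 / 2) := by norm_num

lemma phi_le {a b : ℝ} (ha : 0 < a) (hb : 0 < b) (lam : ℝ) :
    phi a b 0 lam ≤ phi a b 0 0 * Real.exp ((1/(4*(a+b+1))) * lam^2 / 2) := by
  have hc : (0:ℝ) < a + b := by linarith
  have hc1 : (0:ℝ) < a + b + 1 := by linarith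
  have hs : (0:ℝ) < 1/(4*(a+b+1)) := by positivity
  set s : ℝ := 1/(4*(a+b+1)) with hs_def
  have hs1 : s * (1 + (a+b)) = 1/4 := by
    rw [hs_def]; field_simp; ring
  rcases le_or_gt 0 lam with hlam | hlam
  · -- positive side
    have he : a*b/(a+b)^2 - 1/4 = -((((a-b)/(a+b))/2)^2) := by
      field_simp
      ring
    refine gronwall_core (e := (a-b)/(a+b)) (v := a*b/(a+b)^2) hc hs
      (fun t => hasDerivAt_phi ha hb 0 t) (fun t => hasDerivAt_phi ha hb 1 t)
      (fun t => phi_zero_pos ha hb t) (phi_one_zero ha hb) ?_ ?_ lam hlam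
    · intro t
      have h := phi_ode ha hb t
      linear_combination h
    · intro t ht
      have hkey : a*b/(a+b)^2 - s*(1 + (a+b) + t*((a-b)/(a+b)) + s*t^2)
          = -(s*t + ((a-b)/(a+b))/2)^2 := by
        linear_combination he - hs1
      rw [hkey]
      nlinarith [sq_nonneg (s*t + ((a-b)/(a+b))/2)]
  · -- negative side
    have he : a*b/(a+b)^2 - 1/4 = -((((b-a)/(a+b))/2)^2) := by
      field_simp
      ring
    have hneg : ∀ t : ℝ, HasDerivAt (fun u : ℝ => -u) (-1 : ℝ) t := fun t => by
      exact (hasDerivAt_id t).neg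
    have hro : ∀ t : ℝ, HasDerivAt (fun u => phi a b 0 (-u)) (-(phi a b 1 (-t))) t := by
      intro t
      have h := (hasDerivAt_phi ha hb 0 (-t)).comp t (hneg t)
      refine h.congr_deriv ?_; ring
    have hro1 : ∀ t : ℝ, HasDerivAt (fun u => -(phi a b 1 (-u))) (phi a b 2 (-t)) t := by
      intro t
      have h := ((hasDerivAt_phi ha hb 1 (-t)).comp t (hneg t)).neg
      refine h.congr_deriv ?_; ring
    have key := gronwall_core (e := (b-a)/(a+b)) (v := a*b/(a+b)^2) hc hs
      hro hro1 (fun t => phi_zero_pos ha hb (-t))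
      (by simpa using phi_one_zero ha hb) ?_ ?_ (-lam) (by linarith)
    · have h1 : phi a b 0 lam = phi a b 0 (-(-lam)) := by norm_num
      rw [h1]
      calc phi a b 0 (-(-lam)) ≤ phi a b 0 (-0) * Real.exp (s * (-lam)^2 / 2) := key
      _ = phi a b 0 0 * Real.exp (s * lam^2 / 2) := by norm_num
    · intro t
      have h := phi_ode ha hb (-t)
      linear_combination (-1 : ℝ) * h
    · intro t ht
      have hkey : a*b/(a+b)^2 - s*(1 + (a+b) + t*((b-a)/(a+b)) + s*t^2)
          = -(s*t + ((b-a)/(a+b))/2)^2 := by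
        linear_combination he - hs1
      rw [hkey]
      nlinarith [sq_nonneg (s*t + ((b-a)/(a+b))/2)]


end BetaSubGaussianAux

/-- The Beta(α, β) probability measure on `ℝ`, defined by its density
`x^(α−1)(1−x)^(β−1) / B(α,β)` on `(0,1)`. -/
noncomputable def betaMeasure (a b : ℝ) : Measure ℝ :=
  volume.withDensity fun x =>
    ENNReal.ofReal
      (Set.indicator (Set.Ioo (0:ℝ) 1)
        (fun y => y ^ (a - 1) * (1 - y) ^ (b - 1)
          / (∫ z in Set.Ioo (0:ℝ) 1, z ^ (a - 1) * (1 - z) ^ (b - 1))) x)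

/-- A Beta(α, β) random variable is `1/(4(α+β+1))`-sub-Gaussian around its mean
`α/(α+β)`: `E[exp(λ(X − α/(α+β)))] ≤ exp(λ²/(8(α+β+1)))` for all `λ`. -/
theorem stmt_6 (a b : ℝ) (ha : 0 < a) (hb : 0 < b) :
    ∀ lam : ℝ,
      ∫ x, Real.exp (lam * (x - a / (a + b))) ∂(betaMeasure a b)
        ≤ Real.exp (lam ^ 2 / (8 * (a + b + 1))) := by
  intro lam
  have hc : (0:ℝ) < a + b := by linarith
  have hc1 : (0:ℝ) < a + b + 1 := by linarith
  set B : ℝ := ∫ z in Set.Ioo (0:ℝ) 1, z ^ (a - 1) * (1 - z) ^ (b - 1) with hB_def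
  have hBphi : phi a b 0 0 = B := by
    rw [phi, hB_def]
    refine MeasureTheory.setIntegral_congr_fun measurableSet_Ioo fun x _ => ?_
    simp [betaF]
  have hBpos : 0 < B := hBphi ▸ phi_zero_pos ha hb 0
  set ind : ℝ → ℝ := Set.indicator (Set.Ioo (0:ℝ) 1)
    (fun y => y ^ (a - 1) * (1 - y) ^ (b - 1) / B) with hind_def
  have hind_meas : Measurable ind := by
    apply Measurable.indicator _ measurableSet_Ioo
    fun_prop
  have hmeaseq : betaMeasure a b
      = volume.withDensity (fun x => (((fun x => (ind x).toNNReal) x : ℝ≥0) : ℝ≥0∞)) := rfl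
  have hLHS : ∫ x, Real.exp (lam * (x - a / (a + b))) ∂(betaMeasure a b)
      = phi a b 0 lam / B := by
    rw [hmeaseq, integral_withDensity_eq_integral_smul hind_meas.real_toNNReal]
    have hptwise : (fun x => ((ind x).toNNReal : ℝ≥0) • Real.exp (lam * (x - a / (a + b))))
        = Set.indicator (Set.Ioo (0:ℝ) 1)
            (fun y => (betaF a b y / B) * Real.exp (lam * (y - a / (a + b)))) := by
      funext x
      by_cases hx : x ∈ Set.Ioo (0:ℝ) 1
      · rw [Set.indicator_of_mem hx, hind_def, Set.indicator_of_mem hx, NNReal.smul_def,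
          smul_eq_mul, Real.coe_toNNReal _ (div_nonneg (show (0:ℝ) ≤ x ^ (a-1) * (1-x) ^ (b-1) from betaF_nonneg hx) hBpos.le)]
        simp [betaF]
      · rw [Set.indicator_of_notMem hx, hind_def, Set.indicator_of_notMem hx]
        simp
    rw [hptwise, MeasureTheory.integral_indicator measurableSet_Ioo]
    rw [MeasureTheory.setIntegral_congr_fun measurableSet_Ioo
      (g := fun x => ((x - a/(a+b))^(0:ℕ) * Real.exp (lam * (x - a/(a+b))) * betaF a b x) / B)
      (fun x _ => by ring), integral_div]
    rw [phi]
  rw [hLHS, div_le_iff₀ hBpos]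
  have h := phi_le ha hb lam
  rw [hBphi] at h
  have heq : (1/(4*(a+b+1))) * lam^2 / 2 = lam ^ 2 / (8 * (a + b + 1)) := by
    rw [div_mul_eq_mul_div, one_mul, div_div]
    congr 1
    ring
  rw [heq] at h
  calc phi a b 0 lam ≤ B * Real.exp (lam ^ 2 / (8 * (a + b + 1))) := h
  _ = Real.exp (lam ^ 2 / (8 * (a + b + 1))) * B := by ring
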